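/- Fix an integer K > 2 and r₁ ∈ (0,1). The configuration r = (r₁, (1 − r₁)/(K − 1), …, (1 − r₁)/(K − 1)) belongs to R_K(r₁) and achieves the upper bound: p(r) = 2(K − 2 + r₁) / (4(K − 2 + r₁) + 1 − K·r₁). -/

import Mathlib

/-- For `K > 2` and `r₁ ∈ (0,1)`, the configuration
`r = (r₁, (1−r₁)/(K−1), …, (1−r₁)/(K−1))` belongs to `R_K(r₁)` and achieves the
upper bound `p(r) = 2(K−2+r₁)/(4(K−2+r₁)+1−K·r₁)` (names indexed by `0, …, K-1`). -/
theorem uniform_tail_achieves_upper_bound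
    (K : ℕ) (hK : 2 < K) (r1 : ℝ) (hr1 : r1 ∈ Set.Ioo (0 : ℝ) 1) :
    (∀ k < K, (if k = 0 then r1 else (1 - r1) / ((K : ℝ) - 1)) ∈ Set.Ioo (0 : ℝ) 1) ∧
    (∑ k ∈ Finset.range K, (if k = 0 then r1 else (1 - r1) / ((K : ℝ) - 1)) = 1) ∧
    (∀ i j : ℕ, 1 ≤ i → i ≤ j → j < K →
      (if j = 0 then r1 else (1 - r1) / ((K : ℝ) - 1))
        ≤ (if i = 0 then r1 else (1 - r1) / ((K : ℝ) - 1))) ∧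
    2 / (3 + ∑ k ∈ Finset.Ico 1 K,
        (if k = 0 then r1 else (1 - r1) / ((K : ℝ) - 1))
          / (1 - (if k = 0 then r1 else (1 - r1) / ((K : ℝ) - 1))))
      = 2 * ((K : ℝ) - 2 + r1) / (4 * ((K : ℝ) - 2 + r1) + 1 - (K : ℝ) * r1) := by
  obtain ⟨h0, h1⟩ := hr1
  have hK3 : (3 : ℝ) ≤ (K : ℝ) := by exact_mod_cast hK
  have hK1 : (0 : ℝ) < (K : ℝ) - 1 := by linarith
  have ha1 : (1 - r1) / ((K : ℝ) - 1) < 1 := by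
    rw [div_lt_one hK1]; linarith
  have ha0 : 0 < (1 - r1) / ((K : ℝ) - 1) := div_pos (by linarith) hK1
  have hcard : ((K - 1 : ℕ) : ℝ) = (K : ℝ) - 1 := by
    have : 1 ≤ K := by omega
    push_cast [this]; ring
  refine ⟨?_, ?_, ?_, ?_⟩
  · intro k _
    by_cases h : k = 0 <;> simp [h] <;> constructor <;> linarith
  · rw [Finset.range_eq_Ico,
      ← Finset.sum_Ico_consecutive _ (by omega : 0 ≤ 1) (by omega : 1 ≤ K)]
    have h2 : ∑ k ∈ Finset.Ico 1 K, (if k = 0 then r1 else (1 - r1) / ((K : ℝ) - 1))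
        = ∑ k ∈ Finset.Ico 1 K, (1 - r1) / ((K : ℝ) - 1) :=
      Finset.sum_congr rfl (fun k hk => by
        have : k ≠ 0 := by have := (Finset.mem_Ico.mp hk).1; omega
        simp [this])
    rw [h2, Finset.sum_const, Nat.card_Ico, nsmul_eq_mul, hcard]
    simp
    field_simp
    ring
  · intro i j hi hij hj
    have hi0 : i ≠ 0 := by omega
    have hj0 : j ≠ 0 := by omega
    simp [hi0, hj0]
  · have hsum : ∑ k ∈ Finset.Ico 1 K,
        (if k = 0 then r1 else (1 - r1) / ((K : ℝ) - 1))
          / (1 - (if k = 0 then r1 else (1 - r1) / ((K : ℝ) - 1)))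
        = ∑ k ∈ Finset.Ico 1 K,
            ((1 - r1) / ((K : ℝ) - 1)) / (1 - (1 - r1) / ((K : ℝ) - 1)) :=
      Finset.sum_congr rfl (fun k hk => by
        have : k ≠ 0 := by have := (Finset.mem_Ico.mp hk).1; omega
        simp [this])
    rw [hsum, Finset.sum_const, Nat.card_Ico, nsmul_eq_mul, hcard]
    have hd : (0:ℝ) < (K : ℝ) - 2 + r1 := by linarith
    have h1a : 1 - (1 - r1) / ((K : ℝ) - 1) = ((K : ℝ) - 2 + r1) / ((K : ℝ) - 1) := by
      field_simp; ring
    rw [h1a]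
    have hden : (0:ℝ) < 4 * ((K : ℝ) - 2 + r1) + 1 - (K : ℝ) * r1 := by nlinarith
    have hlhs : (0:ℝ) < 3 + ((K : ℝ) - 1) *
        ((1 - r1) / ((K : ℝ) - 1) / (((K : ℝ) - 2 + r1) / ((K : ℝ) - 1))) := by
      have := mul_pos hK1 (div_pos ha0 (div_pos hd hK1))
      linarith
    rw [div_eq_div_iff hlhs.ne' hden.ne']
    field_simp
    ring
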